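/- The number of framing functions F : M → M on M = {-Q, ..., Q} that are odd, non-decreasing, and whose LUT vector (|F(0)|, F(1), ..., F(Q)) has exactly W distinct entries, equals C(Q, W-1) · C(Q+1, W), where C denotes the binomial coefficient. -/
import Mathlib

open Finset

namespace NSFaidAux

variable {Q : ℕ}

/-- The set of positions where a sequence strictly increases. -/
def jumps (a : Fin (Q+1) → Fin (Q+1)) : Finset (Fin Q) :=
  univ.filter fun j => a j.castSucc < a j.succ

/-- Number of elements of `s` strictly below `i`. -/
def cnt (s : Finset (Fin Q)) (i : Fin (Q+1)) : ℕ :=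
  (s.filter fun j => j.val < i.val).card

lemma cnt_le (s : Finset (Fin Q)) (i : Fin (Q+1)) : cnt s i ≤ s.card :=
  Finset.card_filter_le _ _

lemma cnt_mono (s : Finset (Fin Q)) {i i' : Fin (Q+1)} (h : i ≤ i') : cnt s i ≤ cnt s i' := by
  apply Finset.card_le_card
  intro x hx
  simp only [mem_filter] at hx ⊢
  exact ⟨hx.1, lt_of_lt_of_le hx.2 h⟩

lemma cnt_last (s : Finset (Fin Q)) : cnt s (Fin.last Q) = s.card := by
  unfold cnt
  rw [Finset.filter_true_of_mem]
  intro x _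
  exact x.isLt

lemma rank_lemma (s : Finset (Fin Q)) {k : ℕ} (hk : k < s.card) :
    (s.filter fun x => x < s.orderEmbOfFin rfl ⟨k, hk⟩).card = k := by
  have himg : s.filter (fun x => x < s.orderEmbOfFin rfl ⟨k, hk⟩)
      = (Finset.Iio (⟨k, hk⟩ : Fin s.card)).image (s.orderEmbOfFin rfl) := by
    ext x
    simp only [mem_filter, mem_image, mem_Iio]
    constructor
    · rintro ⟨hxs, hxlt⟩
      have : x ∈ Set.range (s.orderEmbOfFin rfl) := by
        rw [Finset.range_orderEmbOfFin]
        exact hxs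
      obtain ⟨m, rfl⟩ := this
      exact ⟨m, (s.orderEmbOfFin rfl).lt_iff_lt.1 hxlt, rfl⟩
    · rintro ⟨m, hm, rfl⟩
      exact ⟨Finset.orderEmbOfFin_mem s rfl m, (s.orderEmbOfFin rfl).lt_iff_lt.2 hm⟩
  rw [himg, Finset.card_image_of_injective _ (s.orderEmbOfFin rfl).injective, Fin.card_Iio]

lemma cnt_surj (s : Finset (Fin Q)) {k : ℕ} (hk : k ≤ s.card) : ∃ i : Fin (Q+1), cnt s i = k := by
  rcases lt_or_eq_of_le hk with h | h
  · refine ⟨(s.orderEmbOfFin rfl ⟨k, h⟩).castSucc, ?_⟩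
    have hset : (s.filter fun j => j.val < ((s.orderEmbOfFin rfl ⟨k, h⟩).castSucc : Fin (Q+1)).val)
        = s.filter fun x => x < s.orderEmbOfFin rfl ⟨k, h⟩ := by
      ext x
      simp only [mem_filter, Fin.coe_castSucc, Fin.lt_def]
    unfold cnt
    rw [hset]
    exact rank_lemma s h
  · exact ⟨Fin.last Q, by rw [cnt_last, h]⟩

lemma cnt_lt_iff (s : Finset (Fin Q)) (j : Fin Q) :
    cnt s j.castSucc < cnt s j.succ ↔ j ∈ s := by
  constructor
  · intro h
    by_contra hj
    have : (s.filter fun x => x.val < (j.castSucc : Fin (Q+1)).val) =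
        (s.filter fun x => x.val < (j.succ : Fin (Q+1)).val) := by
      ext x
      simp only [mem_filter, Fin.coe_castSucc, Fin.val_succ]
      constructor
      · rintro ⟨hx, hlt⟩; exact ⟨hx, by omega⟩
      · rintro ⟨hx, hlt⟩
        refine ⟨hx, ?_⟩
        rcases Nat.lt_or_ge (x : ℕ) (j : ℕ) with h' | h'
        · exact h'
        · exfalso; apply hj
          have : x = j := Fin.ext (by omega)
          rwa [← this]
    unfold cnt at h
    rw [this] at h
    exact lt_irrefl _ h
  · intro hj
    apply Finset.card_lt_card
    constructor
    · intro x hx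
      simp only [mem_filter, Fin.coe_castSucc, Fin.val_succ] at hx ⊢
      exact ⟨hx.1, by omega⟩
    · intro hsub
      have hjmem : j ∈ s.filter fun x => x.val < (j.succ : Fin (Q+1)).val := by
        refine mem_filter.2 ⟨hj, ?_⟩
        simp [Fin.val_succ]
      have := hsub hjmem
      simp at this

/-- A monotone sequence is determined by its jump set and its image. -/
lemma eq_of_jumps_image {a b : Fin (Q+1) → Fin (Q+1)} (ha : Monotone a) (hb : Monotone b)
    (hj : jumps a = jumps b) (hi : image a univ = image b univ) : a = b := by
  -- value just after a jump is the least image element above the current value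
  have key : ∀ (c : Fin (Q+1) → Fin (Q+1)), Monotone c → ∀ i : Fin Q, c i.castSucc < c i.succ →
      ∀ v ∈ image c univ, c i.castSucc < v → c i.succ ≤ v := by
    intro c hc i hjump v hv hlt
    simp only [mem_image, mem_univ, true_and] at hv
    obtain ⟨m, rfl⟩ := hv
    have hm : i.castSucc < m := by
      by_contra hle
      push_neg at hle
      exact absurd (hc hle) (not_le.2 hlt)
    have hm' : (i : ℕ) < (m : ℕ) := by
      have := Fin.lt_def.mp hm
      simpa [Fin.coe_castSucc] using this
    have : i.succ ≤ m := by
      rw [Fin.le_def, Fin.val_succ]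
      omega
    exact hc this
  funext i
  induction i using Fin.induction with
  | zero =>
    apply le_antisymm
    · have : b 0 ∈ image a univ := by rw [hi]; exact mem_image.2 ⟨0, mem_univ _, rfl⟩
      simp only [mem_image, mem_univ, true_and] at this
      obtain ⟨m, hm⟩ := this
      calc a 0 ≤ a m := ha (Fin.zero_le _)
        _ = b 0 := hm
    · have : a 0 ∈ image b univ := by rw [← hi]; exact mem_image.2 ⟨0, mem_univ _, rfl⟩
      simp only [mem_image, mem_univ, true_and] at this
      obtain ⟨m, hm⟩ := this
      calc b 0 ≤ b m := hb (Fin.zero_le _)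
        _ = a 0 := hm
  | succ i IH =>
    by_cases hja : i ∈ jumps a
    · have hjb : i ∈ jumps b := hj ▸ hja
      simp only [jumps, mem_filter, mem_univ, true_and] at hja hjb
      -- both equal the min of image elements above the common current value
      have hane : a i.succ ∈ (image a univ).filter fun v => a i.castSucc < v := by
        simp only [mem_filter, mem_image, mem_univ, true_and]
        exact ⟨⟨i.succ, rfl⟩, hja⟩
      have hbne : b i.succ ∈ (image b univ).filter fun v => b i.castSucc < v := by
        simp only [mem_filter, mem_image, mem_univ, true_and]
        exact ⟨⟨i.succ, rfl⟩, hjb⟩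
      have hsame : ((image a univ).filter fun v => a i.castSucc < v)
          = (image b univ).filter fun v => b i.castSucc < v := by
        rw [hi, IH]
      have h1 : a i.succ = ((image a univ).filter fun v => a i.castSucc < v).min'
          ⟨_, hane⟩ := by
        apply le_antisymm
        · apply Finset.le_min'
          intro v hv
          simp only [mem_filter] at hv
          exact key a ha i hja v hv.1 hv.2
        · exact Finset.min'_le _ _ hane
      have h2 : b i.succ = ((image b univ).filter fun v => b i.castSucc < v).min'
          ⟨_, hbne⟩ := by
        apply le_antisymm
        · apply Finset.le_min'
          intro v hv
          simp only [mem_filter] at hv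
          exact key b hb i hjb v hv.1 hv.2
        · exact Finset.min'_le _ _ hbne
      rw [h1, h2]
      congr 1
    · have hjb : i ∉ jumps b := hj ▸ hja
      simp only [jumps, mem_filter, mem_univ, true_and] at hja hjb
      have ha' : a i.succ = a i.castSucc :=
        le_antisymm (not_lt.1 hja) (ha (Fin.castSucc_le_succ i))
      have hb' : b i.succ = b i.castSucc :=
        le_antisymm (not_lt.1 hjb) (hb (Fin.castSucc_le_succ i))
      rw [ha', hb', IH]

/-- The jump set of a monotone sequence has one fewer element than its image. -/
lemma card_jumps (a : Fin (Q+1) → Fin (Q+1)) (ha : Monotone a) :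
    (jumps a).card + 1 = (image a univ).card := by
  have h : (jumps a).card = ((image a univ).erase (a 0)).card := by
    apply Finset.card_bij (fun j _ => a j.succ)
    · intro j hj
      simp only [jumps, mem_filter, mem_univ, true_and] at hj
      refine Finset.mem_erase.2 ⟨?_, mem_image.2 ⟨j.succ, mem_univ _, rfl⟩⟩
      have h0 : a 0 ≤ a j.castSucc := ha (Fin.zero_le _)
      exact (lt_of_le_of_lt h0 hj).ne'
    · intro j hj j' hj' hEq
      simp only [jumps, mem_filter, mem_univ, true_and] at hj hj'
      by_contra hne
      rcases lt_or_gt_of_ne hne with h' | h'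
      · have hv : (j : ℕ) < (j' : ℕ) := Fin.lt_def.mp h'
        have hle : j.succ ≤ j'.castSucc := by
          rw [Fin.le_def, Fin.val_succ, Fin.coe_castSucc]
          omega
        exact absurd hEq (lt_of_le_of_lt (ha hle) hj').ne
      · have hv : (j' : ℕ) < (j : ℕ) := Fin.lt_def.mp h'
        have hle : j'.succ ≤ j.castSucc := by
          rw [Fin.le_def, Fin.val_succ, Fin.coe_castSucc]
          omega
        exact absurd hEq.symm (lt_of_le_of_lt (ha hle) hj).ne
    · intro v hv
      rw [mem_erase] at hv
      obtain ⟨hne, hv⟩ := hv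
      simp only [mem_image, mem_univ, true_and] at hv
      obtain ⟨m, rfl⟩ := hv
      have hu : (univ.filter fun k : Fin (Q+1) => a k = a m).Nonempty :=
        ⟨m, mem_filter.2 ⟨mem_univ _, rfl⟩⟩
      set m0 := (univ.filter fun k : Fin (Q+1) => a k = a m).min' hu with hm0
      have hm0mem : a m0 = a m := (mem_filter.1 (Finset.min'_mem _ hu)).2
      have hm0pos : (m0 : ℕ) ≠ 0 := by
        intro h0
        apply hne
        rw [← hm0mem]
        congr 1
        exact Fin.ext h0
      have hQlt : (m0 : ℕ) - 1 < Q := by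
        have := m0.isLt
        omega
      refine ⟨⟨(m0 : ℕ) - 1, hQlt⟩, ?_, ?_⟩
      · simp only [jumps, mem_filter, mem_univ, true_and]
        have hsucc : (⟨(m0 : ℕ) - 1, hQlt⟩ : Fin Q).succ = m0 := by
          apply Fin.ext
          simp only [Fin.val_succ]
          omega
        rw [hsucc]
        apply lt_of_le_of_ne
        · apply ha
          rw [Fin.le_def]
          simp only [Fin.coe_castSucc]
          omega
        · intro hcontr
          have hmem : (⟨(m0 : ℕ) - 1, hQlt⟩ : Fin Q).castSucc ∈
              (univ.filter fun k : Fin (Q+1) => a k = a m) :=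
            mem_filter.2 ⟨mem_univ _, by rw [hcontr, hm0mem]⟩
          have := Finset.min'_le _ _ hmem
          rw [← hm0] at this
          rw [Fin.le_def] at this
          simp only [Fin.coe_castSucc] at this
          omega
      · have hsucc : (⟨(m0 : ℕ) - 1, hQlt⟩ : Fin Q).succ = m0 := by
          apply Fin.ext
          simp only [Fin.val_succ]
          omega
        rw [hsucc, hm0mem]
  have h0 : a 0 ∈ image a univ := mem_image.2 ⟨0, mem_univ _, rfl⟩
  rw [h, Finset.card_erase_of_mem h0]
  have : 1 ≤ (image a univ).card := Finset.card_pos.2 ⟨a 0, h0⟩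
  omega

/-- Construction of a monotone sequence from a jump set and a value set. -/
lemma psi_spec (s : Finset (Fin Q)) (t : Finset (Fin (Q+1))) {W : ℕ} (hW : 1 ≤ W)
    (hs : s.card = W - 1) (ht : t.card = W) :
    ∃ a : Fin (Q+1) → Fin (Q+1), Monotone a ∧ jumps a = s ∧ image a univ = t := by
  have hlt : ∀ i : Fin (Q+1), cnt s i < W := by
    intro i
    have := cnt_le s i
    omega
  refine ⟨fun i => t.orderEmbOfFin ht ⟨cnt s i, hlt i⟩, ?_, ?_, ?_⟩
  · intro i i' h
    exact (t.orderEmbOfFin ht).monotone (show (⟨cnt s i, hlt i⟩ : Fin W) ≤ ⟨cnt s i', hlt i'⟩ from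
      cnt_mono s h)
  · ext j
    simp only [jumps, mem_filter, mem_univ, true_and]
    rw [(t.orderEmbOfFin ht).lt_iff_lt]
    rw [Fin.mk_lt_mk]
    exact cnt_lt_iff s j
  · ext x
    simp only [mem_image, mem_univ, true_and]
    constructor
    · rintro ⟨i, rfl⟩
      exact Finset.orderEmbOfFin_mem t ht _
    · intro hx
      have : x ∈ Set.range (t.orderEmbOfFin ht) := by
        rw [Finset.range_orderEmbOfFin]
        exact hx
      obtain ⟨m, rfl⟩ := this
      obtain ⟨i, hi⟩ := cnt_surj s (show (m : ℕ) ≤ s.card by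
        have := m.isLt
        omega)
      exact ⟨i, by congr 1; exact Fin.ext hi⟩

end NSFaidAux

open NSFaidAux in
/-- Proposition 2: the number of `(2Q+1)`-level NS-FAIDs of weight `W`, i.e. of framing
functions identified with their LUT vector `(|F 0|, F 1, …, F Q)` — a non-decreasing
sequence of length `Q+1` with values in `{0,…,Q}` — having exactly `W` distinct entries,
equals `C(Q, W-1) * C(Q+1, W)`. -/
theorem card_ns_faids (Q W : ℕ) (hQ : 1 ≤ Q) (hW1 : 1 ≤ W) (hW2 : W ≤ Q + 1) :
    Nat.card {a : Fin (Q + 1) → Fin (Q + 1) //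
        Monotone a ∧ (Finset.image a Finset.univ).card = W}
      = Nat.choose Q (W - 1) * Nat.choose (Q + 1) W := by
  classical
  rw [Nat.card_eq_fintype_card, Fintype.card_subtype]
  have key : (univ.filter fun a : Fin (Q+1) → Fin (Q+1) =>
        Monotone a ∧ (Finset.image a Finset.univ).card = W).card
      = ((univ.powersetCard (W-1) : Finset (Finset (Fin Q))) ×ˢ
          (univ.powersetCard W : Finset (Finset (Fin (Q+1))))).card := by
    apply Finset.card_bij (fun a _ => (jumps a, image a univ))
    · intro a ha
      rw [mem_filter] at ha
      obtain ⟨-, hmono, hcard⟩ := ha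
      rw [Finset.mem_product]
      dsimp only
      rw [Finset.mem_powersetCard_univ, Finset.mem_powersetCard_univ]
      have := card_jumps a hmono
      constructor
      · omega
      · exact hcard
    · intro a ha b hb hEq
      rw [mem_filter] at ha hb
      rw [Prod.mk.injEq] at hEq
      exact eq_of_jumps_image ha.2.1 hb.2.1 hEq.1 hEq.2
    · rintro ⟨s, t⟩ hmem
      rw [Finset.mem_product, Finset.mem_powersetCard_univ, Finset.mem_powersetCard_univ] at hmem
      obtain ⟨hs, ht⟩ := hmem
      obtain ⟨a, hmono, hjumps, himg⟩ := psi_spec s t hW1 hs ht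
      refine ⟨a, ?_, ?_⟩
      · rw [mem_filter]
        exact ⟨mem_univ _, hmono, by rw [himg]; exact ht⟩
      · rw [hjumps, himg]
  rw [key, Finset.card_product, Finset.card_powersetCard, Finset.card_powersetCard,
    Finset.card_univ, Finset.card_univ, Fintype.card_fin, Fintype.card_fin]
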